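/- Let X = ℚ ∩ [0,∞) (the nonnegative rationals) with p(x,y) = max{x,y}. Then p is a partial metric on X, the partial metric space (X,p) is 0-complete, but (X,p) is not complete. -/

import Mathlib

open Filter Topology

/-- A partial metric on a type `X`. -/
structure IsPartialMetric {X : Type*} (p : X → X → ℝ) : Prop where
  nonneg : ∀ x y, 0 ≤ p x y
  symm : ∀ x y, p x y = p y x
  eq_of : ∀ x y, p x x = p x y → p x y = p y y → x = y
  self_le : ∀ x y, p x x ≤ p x y
  triangle : ∀ x y z, p x z + p y y ≤ p x y + p y z

/-- A sequence `x` converges to `a` in the partial metric `p`: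
`lim_{n→∞} p(a, x n) = p(a,a)`. -/
def PConverges {X : Type*} (p : X → X → ℝ) (x : ℕ → X) (a : X) : Prop :=
  Tendsto (fun n => p a (x n)) atTop (𝓝 (p a a))

/-- A sequence is `0`-Cauchy: `lim_{m,n→∞} p(x n, x m) = 0`. -/
def PZeroCauchy {X : Type*} (p : X → X → ℝ) (x : ℕ → X) : Prop :=
  Tendsto (fun mn : ℕ × ℕ => p (x mn.1) (x mn.2)) atTop (𝓝 0)

/-- `(X,p)` is `0`-complete. -/
def PZeroComplete {X : Type*} (p : X → X → ℝ) : Prop :=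
  ∀ x : ℕ → X, PZeroCauchy p x → ∃ a, PConverges p x a ∧ p a a = 0

/-- A set is sequentially closed with respect to `p`-convergence. -/
def SeqClosed {X : Type*} (p : X → X → ℝ) (A : Set X) : Prop :=
  ∀ (x : ℕ → X) (a : X), (∀ n, x n ∈ A) → PConverges p x a → a ∈ A

/-- A sequence is Cauchy in `(X,p)`: the double limit `lim_{m,n→∞} p(x n, x m)`
exists (finite). -/
def PCauchy {X : Type*} (p : X → X → ℝ) (x : ℕ → X) : Prop :=
  ∃ L : ℝ, Tendsto (fun mn : ℕ × ℕ => p (x mn.1) (x mn.2)) atTop (𝓝 L)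

/-- `(X,p)` is complete: every Cauchy sequence converges to some `a` with
`p(a,a) = lim_{m,n→∞} p(x n, x m)`. -/
def PComplete {X : Type*} (p : X → X → ℝ) : Prop :=
  ∀ x : ℕ → X, PCauchy p x → ∃ a, PConverges p x a ∧
    Tendsto (fun mn : ℕ × ℕ => p (x mn.1) (x mn.2)) atTop (𝓝 (p a a))

/-- Continuity of `T : X → X` with respect to the open `p`-balls. -/
def PMContinuous {X : Type*} (p : X → X → ℝ) (T : X → X) : Prop :=
  ∀ x₀ : X, ∀ ε > (0:ℝ), ∃ δ > (0:ℝ), ∀ y,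
    p x₀ y < p x₀ x₀ + δ → p (T x₀) (T y) < p (T x₀) (T x₀) + ε

/-- A set `A` is `0`-compact: every sequence in `A` has a subsequence converging
to some `a ∈ A` with `lim_{n→∞} p(x (k n), a) = p(a,a) = 0`. -/
def PZeroCompact {X : Type*} (p : X → X → ℝ) (A : Set X) : Prop :=
  ∀ x : ℕ → X, (∀ n, x n ∈ A) → ∃ (k : ℕ → ℕ) (a : X), StrictMono k ∧ a ∈ A ∧
    Tendsto (fun n => p (x (k n)) a) atTop (𝓝 (p a a)) ∧ p a a = 0

lemma diag_tendsto : Tendsto (fun n : ℕ => (n, n)) atTop atTop := by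
  rw [← prod_atTop_atTop_eq]
  exact tendsto_id.prodMk tendsto_id

lemma max_double_tendsto {f : ℕ → ℝ} {L : ℝ} (hf : Tendsto f atTop (𝓝 L)) :
    Tendsto (fun mn : ℕ × ℕ => max (f mn.1) (f mn.2)) atTop (𝓝 L) := by
  have h : Tendsto (fun mn : ℕ × ℕ => (f mn.1, f mn.2)) atTop (𝓝 (L, L)) := by
    rw [← prod_atTop_atTop_eq, nhds_prod_eq]
    exact (hf.comp tendsto_fst).prodMk (hf.comp tendsto_snd)
  have := (continuous_max.tendsto (L, L)).comp h
  simpa [max_self, Function.comp_def] using this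

/-- the nonnegative rationals with `p(x,y) = max{x,y}` form a
`0`-complete partial metric space which is not complete. -/
theorem nonneg_rat_max_zeroComplete_not_complete :
    IsPartialMetric (fun x y : {q : ℚ // 0 ≤ q} => max (x.1 : ℝ) (y.1 : ℝ)) ∧
    PZeroComplete (fun x y : {q : ℚ // 0 ≤ q} => max (x.1 : ℝ) (y.1 : ℝ)) ∧
    ¬ PComplete (fun x y : {q : ℚ // 0 ≤ q} => max (x.1 : ℝ) (y.1 : ℝ)) := by
  refine ⟨⟨?_, ?_, ?_, ?_, ?_⟩, ?_, ?_⟩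
  · intro x y
    have : (0:ℝ) ≤ (x.1:ℝ) := by exact_mod_cast x.2
    exact le_trans this (le_max_left _ _)
  · intro x y; exact max_comm _ _
  · intro x y h1 h2
    simp only [max_self] at h1 h2
    have : (x.1:ℝ) = (y.1:ℝ) := h1.trans h2
    exact Subtype.ext (by exact_mod_cast this)
  · intro x y; simp [le_max_left]
  · intro x y z
    have hxy : (x.1:ℝ) ≤ max (x.1:ℝ) (y.1:ℝ) := le_max_left _ _
    have hyz : (z.1:ℝ) ≤ max (y.1:ℝ) (z.1:ℝ) := le_max_right _ _
    have hy1 : (y.1:ℝ) ≤ max (x.1:ℝ) (y.1:ℝ) := le_max_right _ _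
    have hy2 : (y.1:ℝ) ≤ max (y.1:ℝ) (z.1:ℝ) := le_max_left _ _
    rcases max_cases (x.1:ℝ) (z.1:ℝ) with ⟨h, _⟩ | ⟨h, _⟩ <;>
      simp only [max_self, h] <;> linarith
  · intro x hx
    have hdiag := hx.comp diag_tendsto
    have hx0 : Tendsto (fun n => ((x n).1 : ℝ)) atTop (𝓝 0) := by
      simpa [max_self, Function.comp_def] using hdiag
    refine ⟨⟨0, le_refl 0⟩, ?_, by simp⟩
    unfold PConverges
    simp only [Rat.cast_zero, max_self]
    exact hx0.congr fun n => (max_eq_right (by exact_mod_cast (x n).2 : (0:ℝ) ≤ (x n).1)).symm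
  · intro hcomp
    have hirr : Irrational (Real.sqrt 2) := irrational_sqrt_two
    have hlt : ∀ n : ℕ, Real.sqrt 2 - 1/(n+1) < Real.sqrt 2 := by
      intro n
      have : (0:ℝ) < 1/(n+1) := by positivity
      linarith
    have hq : ∀ n : ℕ, ∃ q : ℚ, Real.sqrt 2 - 1/(n+1) < q ∧ (q:ℝ) < Real.sqrt 2 :=
      fun n => exists_rat_btwn (hlt n)
    choose q hq1 hq2 using hq
    have hqpos : ∀ n, 0 ≤ q n := by
      intro n
      have h1 : (1:ℝ) < Real.sqrt 2 := by
        have := Real.lt_sqrt (x := 1) (y := 2) (by norm_num)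
        rw [this]; norm_num
      have h2 : (1:ℝ)/(n+1) ≤ 1 := by
        rw [div_le_one (by positivity)]
        exact le_add_of_nonneg_left (Nat.cast_nonneg n)
      have : (0:ℝ) ≤ (q n : ℝ) := by
        have := hq1 n; linarith
      exact_mod_cast this
    set x : ℕ → {q : ℚ // 0 ≤ q} := fun n => ⟨q n, hqpos n⟩ with hxdef
    have htend : Tendsto (fun n => ((x n).1 : ℝ)) atTop (𝓝 (Real.sqrt 2)) := by
      have hlow : Tendsto (fun n : ℕ => Real.sqrt 2 - 1/(n+1)) atTop (𝓝 (Real.sqrt 2)) := by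
        have := tendsto_one_div_add_atTop_nhds_zero_nat (𝕜 := ℝ)
        simpa using (tendsto_const_nhds (x := Real.sqrt 2)).sub this
      exact tendsto_of_tendsto_of_tendsto_of_le_of_le hlow tendsto_const_nhds
        (fun n => le_of_lt (hq1 n)) (fun n => le_of_lt (hq2 n))
    have hdouble : Tendsto (fun mn : ℕ × ℕ => max ((x mn.1).1 : ℝ) ((x mn.2).1 : ℝ)) atTop
        (𝓝 (Real.sqrt 2)) := max_double_tendsto htend
    obtain ⟨a, _, hlim⟩ := hcomp x ⟨Real.sqrt 2, hdouble⟩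
    have ha : max (a.1 : ℝ) (a.1 : ℝ) = Real.sqrt 2 := tendsto_nhds_unique hlim hdouble
    rw [max_self] at ha
    exact hirr ⟨a.1, ha⟩
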